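/- Let A and B be von Neumann algebras, H a complex Hilbert space, P ∈ L(H) positive, and suppose Φ₁ ∈ CP_P(A;H) and Φ₂ ∈ CP_P(B;H) are compatible. If Φ₁ is a *-representation (or if Φ₂ is), then the ranges of Φ₁ and Φ₂ commute, the joint map is unique, and it is given by Ψ(a ⊗ b) = Φ₁(a)Φ₂(b) for all a ∈ A and b ∈ B. -/

import Mathlib

open scoped ComplexOrder ComplexInnerProductSpace Topology

noncomputable section

/-- A linear map `Φ : A → L(H)` from a `*`-algebra into the bounded operators on a complex
Hilbert space `H` is *completely positive* if for all `n`, `a₁, …, aₙ ∈ A` and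
`φ₁, …, φₙ ∈ H` one has `∑ j k, ⟪φ j, Φ (star (a j) * a k) (φ k)⟫ ≥ 0`. -/
def IsCompletelyPositive {A : Type*} [NonUnitalNonAssocSemiring A] [StarRing A] [Module ℂ A]
    {H : Type*} [NormedAddCommGroup H] [InnerProductSpace ℂ H]
    (Φ : A →ₗ[ℂ] H →L[ℂ] H) : Prop :=
  ∀ (n : ℕ) (a : Fin n → A) (v : Fin n → H),
    0 ≤ ∑ j, ∑ k, ⟪v j, Φ (star (a j) * a k) (v k)⟫

/-- The convex set `CP_P(A;H)` of completely positive maps `Φ : A → L(H)` with `Φ 1 = P`. -/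
def CPWithUnit (A : Type*) [Ring A] [StarRing A] [Algebra ℂ A]
    (H : Type*) [NormedAddCommGroup H] [InnerProductSpace ℂ H]
    (P : H →L[ℂ] H) : Set (A →ₗ[ℂ] H →L[ℂ] H) :=
  {Φ | IsCompletelyPositive Φ ∧ Φ 1 = P}

/-- `x` is an extremal point of the convex set `S`: whenever `x` is a nontrivial convex
combination of two members of `S`, they coincide. -/
def IsExtremalIn {V : Type*} [AddCommMonoid V] [Module ℂ V] (S : Set V) (x : V) : Prop :=
  x ∈ S ∧ ∀ y ∈ S, ∀ z ∈ S, ∀ t : ℝ, 0 < t → t < 1 →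
    x = (t : ℂ) • y + ((1 - t : ℝ) : ℂ) • z → y = z

/-- `C`, together with the bilinear map `tmul`, is a tensor product of the algebras
`A` and `B`: `tmul` is multiplicative (`(a ⊗ b)(a' ⊗ b') = aa' ⊗ bb'`), star-preserving,
unital, and the span of the elementary tensors is dense in `C`. -/
structure IsTensorProductOfAlgebras (A B C : Type*)
    [CStarAlgebra A] [CStarAlgebra B] [CStarAlgebra C]
    (tmul : A →ₗ[ℂ] B →ₗ[ℂ] C) : Prop where
  tmul_mul : ∀ (a a' : A) (b b' : B), tmul a b * tmul a' b' = tmul (a * a') (b * b')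
  tmul_star : ∀ (a : A) (b : B), star (tmul a b) = tmul (star a) (star b)
  tmul_one : tmul 1 1 = 1
  dense_span : Dense (↑(Submodule.span ℂ {c : C | ∃ a b, c = tmul a b}) : Set C)

/-- A linear map between `*`-algebras is a `*`-representation if it is multiplicative and
star-preserving. -/
def IsStarRepresentation {A : Type*} [Ring A] [StarRing A] [Algebra ℂ A]
    {H : Type*} [NormedAddCommGroup H] [InnerProductSpace ℂ H] [CompleteSpace H]
    (Φ : A →ₗ[ℂ] H →L[ℂ] H) : Prop :=
  (∀ a a' : A, Φ (a * a') = Φ a * Φ a') ∧ ∀ a : A, Φ (star a) = star (Φ a)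


section Aux
set_option linter.unusedSectionVars false
variable {C : Type*} [Ring C] [StarRing C] [Algebra ℂ C]
variable {H : Type*} [NormedAddCommGroup H] [InnerProductSpace ℂ H] [CompleteSpace H]
variable {Ψ : C →ₗ[ℂ] H →L[ℂ] H}

lemma cp_diag (hΨ : IsCompletelyPositive Ψ) (a : C) (v : H) :
    0 ≤ ⟪v, Ψ (star a * a) v⟫ := by
  have := hΨ 1 (fun _ => a) (fun _ => v)
  simpa using this

lemma cp_two (hΨ : IsCompletelyPositive Ψ) (x y : C) (u v : H) :
    0 ≤ ⟪u, Ψ (star x * x) u⟫ + ⟪u, Ψ (star x * y) v⟫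
      + ⟪v, Ψ (star y * x) u⟫ + ⟪v, Ψ (star y * y) v⟫ := by
  have := hΨ 2 ![x, y] ![u, v]
  simpa [Fin.sum_univ_two, add_assoc] using this

lemma cp_star (hΨ : IsCompletelyPositive Ψ) (c : C) : Ψ (star c) = star (Ψ c) := by
  have him : ∀ u v : H, (⟪u, Ψ c v⟫ + ⟪v, Ψ (star c) u⟫).im = 0 := by
    intro u v
    have h := cp_two hΨ 1 c u v
    simp only [star_one, one_mul, mul_one] at h
    have h1 : 0 ≤ ⟪u, Ψ 1 u⟫ := by simpa using cp_diag hΨ 1 u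
    have h2 : 0 ≤ ⟪v, Ψ (star c * c) v⟫ := cp_diag hΨ c v
    have h0 := (Complex.nonneg_iff.mp h).2
    have e1 := (Complex.nonneg_iff.mp h1).2
    have e2 := (Complex.nonneg_iff.mp h2).2
    simp only [Complex.add_im] at h0 ⊢
    linarith
  have hconj : ∀ u v : H, ⟪v, Ψ (star c) u⟫ = starRingEnd ℂ ⟪u, Ψ c v⟫ := by
    intro u v
    have hA := him u v
    have hB := him ((Complex.I : ℂ) • u) v
    rw [inner_smul_left, map_smul, inner_smul_right] at hB
    rw [Complex.conj_I] at hB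
    set α := (⟪u, Ψ c v⟫ : ℂ)
    set β := (⟪v, Ψ (star c) u⟫ : ℂ)
    simp only [Complex.add_im, Complex.mul_im, Complex.neg_im, Complex.neg_re,
      Complex.I_re, Complex.I_im, Complex.ext_iff, Complex.conj_re, Complex.conj_im] at hA hB ⊢
    constructor <;> nlinarith [hA, hB]
  ext u
  apply ext_inner_left ℂ
  intro v
  rw [ContinuousLinearMap.star_eq_adjoint, ContinuousLinearMap.adjoint_inner_right,
    hconj u v, inner_conj_symm]

lemma cp_rev (hΨ : IsCompletelyPositive Ψ) (e : C) (u v : H) :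
    (⟪v, Ψ (star e) u⟫ : ℂ) = starRingEnd ℂ ⟪u, Ψ e v⟫ := by
  rw [cp_star hΨ, ContinuousLinearMap.star_eq_adjoint,
    ContinuousLinearMap.adjoint_inner_right, inner_conj_symm]

lemma cp_cs (hΨ : IsCompletelyPositive Ψ) (x y : C) (u v : H) :
    ‖(⟪u, Ψ (star x * y) v⟫ : ℂ)‖ ^ 2 ≤
      (⟪u, Ψ (star x * x) u⟫).re * (⟪v, Ψ (star y * y) v⟫).re := by
  set Ac : ℂ := ⟪u, Ψ (star x * x) u⟫ with hAc
  set Bc : ℂ := ⟪v, Ψ (star y * y) v⟫ with hBc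
  set d : ℂ := ⟪u, Ψ (star x * y) v⟫ with hd
  obtain ⟨hA, hAim⟩ := Complex.nonneg_iff.mp (cp_diag hΨ x u)
  obtain ⟨hB, hBim⟩ := Complex.nonneg_iff.mp (cp_diag hΨ y v)
  rcases eq_or_ne d 0 with h0 | h0
  · rw [h0]; simpa using mul_nonneg hA hB
  have hA' : Ac = ((Ac.re : ℝ) : ℂ) := Complex.ext rfl (by rw [Complex.ofReal_im, hAc, ← hAim])
  have hB' : Bc = ((Bc.re : ℝ) : ℂ) := Complex.ext rfl (by rw [Complex.ofReal_im, hBc, ← hBim])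
  set A : ℝ := Ac.re
  set B : ℝ := Bc.re
  set nd : ℝ := Complex.normSq d with hnd
  have key : ∀ t : ℝ, 0 ≤ (nd * A) * (t * t) + (2 * nd) * t + B := by
    intro t
    set s : ℂ := (t : ℂ) * d with hs
    have h := cp_two hΨ x y (s • u) v
    simp only [map_smul, inner_smul_left, inner_smul_right] at h
    rw [← hAc, ← hBc, ← hd] at h
    have hyx : star y * x = star (star x * y) := by rw [star_mul, star_star]
    rw [hyx, cp_rev hΨ (star x * y) u v, ← hd] at h
    have hid : s * ((starRingEnd ℂ) s * Ac) + (starRingEnd ℂ) s * d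
        + s * (starRingEnd ℂ) d + Bc
        = (((nd * A) * (t * t) + (2 * nd) * t + B : ℝ) : ℂ) := by
      have hc : d * (starRingEnd ℂ) d = (nd : ℂ) := Complex.mul_conj d
      rw [hA', hB', hs, map_mul, Complex.conj_ofReal]
      push_cast
      linear_combination (((t:ℂ) * t * A + 2 * t)) * hc
    rw [hid] at h
    exact_mod_cast h
  have hdisc := discrim_le_zero key
  rw [discrim] at hdisc
  have hndpos : 0 < nd := Complex.normSq_pos.mpr h0
  rw [Complex.sq_norm, ← hnd]
  nlinarith

lemma cp_key_left (hΨ : IsCompletelyPositive Ψ) {x : C}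
    (hx : Ψ (star x * x) = star (Ψ x) * Ψ x) (hPx : Ψ 1 * Ψ x = Ψ x) (y : C) :
    Ψ (star x * y) = star (Ψ x) * Ψ y := by
  have hkey : ∀ u v : H, (⟪u, Ψ (star x * y) v⟫ : ℂ) = ⟪Ψ x u, Ψ y v⟫ := by
    intro u v
    set d : ℂ := ⟪u, Ψ (star x * y) v⟫ - ⟪Ψ x u, Ψ y v⟫ with hd
    set Bc : ℂ := ⟪v, Ψ (star y * y) v⟫ with hBc
    have hQ : ∀ s : ℂ, 0 ≤ (starRingEnd ℂ) s * d + s * (starRingEnd ℂ) d + Bc := by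
      intro s
      have h := hΨ 3 ![x, 1, y] ![s • u, -(s • (Ψ x u)), v]
      have e1 : (⟪u, (Ψ (star x * x)) u⟫ : ℂ) = ⟪Ψ x u, Ψ x u⟫ := by
        rw [hx, ContinuousLinearMap.mul_apply, ContinuousLinearMap.star_eq_adjoint,
          ContinuousLinearMap.adjoint_inner_right]
      have e2 : (⟪u, (Ψ (star x)) (Ψ x u)⟫ : ℂ) = ⟪Ψ x u, Ψ x u⟫ := by
        rw [cp_star hΨ, ContinuousLinearMap.star_eq_adjoint,
          ContinuousLinearMap.adjoint_inner_right]
      have e5 : (Ψ 1) (Ψ x u) = Ψ x u := by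
        rw [← ContinuousLinearMap.mul_apply, hPx]
      have e7 : (⟪v, (Ψ (star y * x)) u⟫ : ℂ)
          = (starRingEnd ℂ) ⟪u, (Ψ (star x * y)) v⟫ := by
        have hyx : star y * x = star (star x * y) := by rw [star_mul, star_star]
        rw [hyx, cp_rev hΨ]
      have e8 : (⟪v, (Ψ (star y)) (Ψ x u)⟫ : ℂ)
          = (starRingEnd ℂ) ⟪Ψ x u, (Ψ y) v⟫ := cp_rev hΨ y (Ψ x u) v
      simp only [Fin.sum_univ_three, Matrix.cons_val_zero, Matrix.cons_val_one,
        Matrix.head_cons, Matrix.cons_val_two, Matrix.tail_cons, star_one, one_mul, mul_one,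
        map_neg, map_smul, inner_neg_left, inner_neg_right, inner_smul_left, inner_smul_right,
        ContinuousLinearMap.neg_apply, ContinuousLinearMap.smul_apply] at h
      rw [e1, e2, e7, e8] at h
      refine le_of_le_of_eq h ?_
      rw [hd, hBc]
      have e45 : (⟪Ψ x u, (Ψ 1) (Ψ x u)⟫ : ℂ) = ⟪Ψ x u, Ψ x u⟫ := by rw [e5]
      rw [e45]
      simp only [map_sub]
      ring
    obtain ⟨B, hB⟩ : ∃ B : ℝ, Bc = (B : ℂ) :=
      ⟨Bc.re, Complex.ext rfl (by
        rw [Complex.ofReal_im]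
        exact ((Complex.nonneg_iff.mp (cp_diag hΨ y v)).2).symm)⟩
    have ht : ∀ t : ℝ, 0 ≤ -(2 * t * Complex.normSq d) + B := by
      intro t
      have h := hQ (-(t : ℂ) * d)
      have hid : (starRingEnd ℂ) (-(t : ℂ) * d) * d + (-(t : ℂ) * d) * (starRingEnd ℂ) d + Bc
          = ((-(2 * t * Complex.normSq d) + B : ℝ) : ℂ) := by
        have hc : d * (starRingEnd ℂ) d = ((Complex.normSq d : ℝ) : ℂ) := Complex.mul_conj d
        rw [hB, map_mul, map_neg, Complex.conj_ofReal]
        push_cast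
        linear_combination (-(2:ℂ) * t) * hc
      rw [hid] at h
      exact_mod_cast h
    have hd0 : d = 0 := by
      by_contra h0
      have hnd : 0 < Complex.normSq d := Complex.normSq_pos.mpr h0
      have hthis := ht ((B + 1) / (2 * Complex.normSq d))
      have hcalc : 2 * ((B + 1) / (2 * Complex.normSq d)) * Complex.normSq d = B + 1 := by
        field_simp
      rw [hcalc] at hthis
      linarith
    exact sub_eq_zero.mp hd0
  ext u
  refine ext_inner_left ℂ fun v => ?_
  rw [ContinuousLinearMap.mul_apply, ContinuousLinearMap.star_eq_adjoint,
    ContinuousLinearMap.adjoint_inner_right]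
  exact hkey v u

lemma cp_mul_left (hΨ : IsCompletelyPositive Ψ) {x : C}
    (h1 : Ψ (x * star x) = Ψ x * star (Ψ x)) (h2 : Ψ x * Ψ 1 = Ψ x) (y : C) :
    Ψ (x * y) = Ψ x * Ψ y := by
  have hs := cp_star hΨ x
  have hΨ1 : star (Ψ 1) = Ψ 1 := by rw [← cp_star hΨ 1, star_one]
  have hx' : Ψ (star (star x) * star x) = star (Ψ (star x)) * Ψ (star x) := by
    rw [star_star, hs, star_star, h1]
  have hPx' : Ψ 1 * Ψ (star x) = Ψ (star x) := by
    rw [hs]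
    calc Ψ 1 * star (Ψ x) = star (Ψ x * star (Ψ 1)) := by rw [star_mul, star_star]
      _ = star (Ψ x) := by rw [hΨ1, h2]
  have h := cp_key_left hΨ hx' hPx' y
  rwa [star_star, hs, star_star] at h

lemma cp_mul_right (hΨ : IsCompletelyPositive Ψ) {x : C}
    (h1 : Ψ (star x * x) = star (Ψ x) * Ψ x) (h2 : Ψ 1 * Ψ x = Ψ x) (y : C) :
    Ψ (y * x) = Ψ y * Ψ x := by
  have KL := cp_key_left hΨ h1 h2 (star y)
  calc Ψ (y * x) = Ψ (star (star x * star y)) := by rw [star_mul, star_star, star_star]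
    _ = star (Ψ (star x * star y)) := cp_star hΨ _
    _ = star (star (Ψ x) * Ψ (star y)) := by rw [KL]
    _ = star (Ψ (star y)) * Ψ x := by rw [star_mul, star_star]
    _ = Ψ y * Ψ x := by rw [cp_star hΨ, star_star]

end Aux

section Bound
set_option linter.unusedSectionVars false
variable {C : Type*} [CStarAlgebra C]
variable {H : Type*} [NormedAddCommGroup H] [InnerProductSpace ℂ H] [CompleteSpace H]
variable {Ψ : C →ₗ[ℂ] H →L[ℂ] H}

lemma cstar_exists_sub (c : C) :
    ∃ e : C, algebraMap ℝ C ‖star c * c‖ - star c * c = star e * e := by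
  letI := CStarAlgebra.spectralOrder C
  haveI := CStarAlgebra.spectralOrderedRing C
  set m : C := algebraMap ℝ C ‖star c * c‖ - star c * c with hm
  have hm0 : 0 ≤ m := sub_nonneg.mpr
    (IsSelfAdjoint.le_algebraMap_norm_self (IsSelfAdjoint.star_mul_self c))
  exact ⟨CFC.sqrt m, by
    rw [(IsSelfAdjoint.of_nonneg (CFC.sqrt_nonneg m)).star_eq, CFC.sqrt_mul_sqrt_self m hm0]⟩

lemma cp_norm_le (hΨ : IsCompletelyPositive Ψ) (c : C) : ‖Ψ c‖ ≤ ‖Ψ 1‖ * ‖c‖ := by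
  refine ContinuousLinearMap.opNorm_le_bound _ (by positivity) fun v => ?_
  set u : H := Ψ c v with hu
  have hcs := cp_cs hΨ 1 c u v
  simp only [star_one, one_mul] at hcs
  have h1 : (⟪u, Ψ 1 u⟫).re ≤ ‖Ψ 1‖ * (‖u‖ * ‖u‖) :=
    calc (⟪u, Ψ 1 u⟫).re ≤ ‖(⟪u, Ψ 1 u⟫ : ℂ)‖ := Complex.re_le_norm _
      _ ≤ ‖u‖ * ‖Ψ 1 u‖ := norm_inner_le_norm _ _
      _ ≤ ‖u‖ * (‖Ψ 1‖ * ‖u‖) := by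
          gcongr; exact ContinuousLinearMap.le_opNorm _ _
      _ = ‖Ψ 1‖ * (‖u‖ * ‖u‖) := by ring
  have h2 : (⟪v, Ψ (star c * c) v⟫).re ≤ (‖c‖ * ‖c‖) * (‖Ψ 1‖ * (‖v‖ * ‖v‖)) := by
    set r : ℝ := ‖star c * c‖ with hr
    obtain ⟨e, he⟩ := cstar_exists_sub c
    have hnn : 0 ≤ ⟪v, Ψ (algebraMap ℝ C r - star c * c) v⟫ := by
      rw [he]; exact cp_diag hΨ e v
    have hΨr : Ψ (algebraMap ℝ C r) = (r : ℂ) • Ψ 1 := by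
      rw [Algebra.algebraMap_eq_smul_one, ← algebraMap_smul ℂ r (1 : C), map_smul]
      norm_num
    rw [map_sub] at hnn
    have h3 := (Complex.nonneg_iff.mp hnn).1
    rw [ContinuousLinearMap.sub_apply, inner_sub_right, Complex.sub_re, hΨr] at h3
    have hv1 : (⟪v, ((r : ℂ) • Ψ 1) v⟫).re = r * (⟪v, Ψ 1 v⟫).re := by
      rw [ContinuousLinearMap.smul_apply, inner_smul_right]
      simp
    rw [hv1] at h3
    have hr2 : r = ‖c‖ * ‖c‖ := by rw [hr, CStarRing.norm_star_mul_self]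
    have hΨ1v : (⟪v, Ψ 1 v⟫).re ≤ ‖Ψ 1‖ * (‖v‖ * ‖v‖) :=
      calc (⟪v, Ψ 1 v⟫).re ≤ ‖(⟪v, Ψ 1 v⟫ : ℂ)‖ := Complex.re_le_norm _
        _ ≤ ‖v‖ * ‖Ψ 1 v‖ := norm_inner_le_norm _ _
        _ ≤ ‖v‖ * (‖Ψ 1‖ * ‖v‖) := by
            gcongr; exact ContinuousLinearMap.le_opNorm _ _
        _ = ‖Ψ 1‖ * (‖v‖ * ‖v‖) := by ring
    have hrnn : (0:ℝ) ≤ r := hr ▸ norm_nonneg _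
    rw [hr2] at h3 hrnn
    nlinarith [mul_le_mul_of_nonneg_left hΨ1v hrnn]
  have habs : ‖(⟪u, (Ψ c) v⟫ : ℂ)‖ = ‖u‖ ^ 2 := by
    rw [← hu, @inner_self_eq_norm_sq_to_K ℂ]
    simp
  rw [habs] at hcs
  set K : ℝ := ‖Ψ 1‖ * ‖c‖ * ‖v‖ with hK
  have hK0 : 0 ≤ K := by positivity
  show ‖u‖ ≤ K
  have hre2 : 0 ≤ (⟪v, Ψ (star c * c) v⟫).re := (Complex.nonneg_iff.mp (cp_diag hΨ c v)).1
  have hre1 : 0 ≤ (⟪u, Ψ 1 u⟫).re := by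
    have := cp_diag hΨ 1 u; simp only [star_one, one_mul] at this
    exact (Complex.nonneg_iff.mp this).1
  have hmain : (‖u‖ ^ 2) ^ 2 ≤ K ^ 2 * ‖u‖ ^ 2 := by
    calc (‖u‖ ^ 2) ^ 2 ≤ (⟪u, Ψ 1 u⟫).re * (⟪v, Ψ (star c * c) v⟫).re := hcs
      _ ≤ (‖Ψ 1‖ * (‖u‖ * ‖u‖)) * ((‖c‖ * ‖c‖) * (‖Ψ 1‖ * (‖v‖ * ‖v‖))) :=
          mul_le_mul h1 h2 hre2 (by positivity)
      _ = K ^ 2 * ‖u‖ ^ 2 := by rw [hK]; ring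
  have h5 : ‖u‖ ^ 2 ≤ K ^ 2 := by
    rcases eq_or_lt_of_le (norm_nonneg u) with h | h
    · rw [← h]; simpa using sq_nonneg K
    · nlinarith
  nlinarith [norm_nonneg u]
end Bound

section Main
set_option linter.unusedSectionVars false
variable {A B C : Type*} [CStarAlgebra A] [CStarAlgebra B] [CStarAlgebra C]
variable {H : Type*} [NormedAddCommGroup H] [InnerProductSpace ℂ H] [CompleteSpace H]

lemma joint_prod (tmul : A →ₗ[ℂ] B →ₗ[ℂ] C) (htp : IsTensorProductOfAlgebras A B C tmul)
    (Φ₁ : A →ₗ[ℂ] H →L[ℂ] H) (Φ₂ : B →ₗ[ℂ] H →L[ℂ] H)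
    (Ψ : C →ₗ[ℂ] H →L[ℂ] H) (hΨcp : IsCompletelyPositive Ψ)
    (hmarg₁ : ∀ a : A, Ψ (tmul a 1) = Φ₁ a) (hmarg₂ : ∀ b : B, Ψ (tmul 1 b) = Φ₂ b)
    (hrep : IsStarRepresentation Φ₁ ∨ IsStarRepresentation Φ₂) (a : A) (b : B) :
    Ψ (tmul a b) = Φ₁ a * Φ₂ b ∧ Ψ (tmul a b) = Φ₂ b * Φ₁ a := by
  have hΨone : Ψ 1 = Φ₁ 1 := by rw [← htp.tmul_one, hmarg₁]
  have hΨone' : Ψ 1 = Φ₂ 1 := by rw [← htp.tmul_one, hmarg₂]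
  rcases hrep with ⟨hm, hst⟩ | ⟨hm, hst⟩
  · set x : C := tmul a 1 with hxdef
    have hxs : star x = tmul (star a) 1 := by rw [hxdef, htp.tmul_star, star_one]
    have hmul₁ : ∀ a' : A, x * tmul a' 1 = tmul (a * a') 1 := fun a' => by
      rw [hxdef, htp.tmul_mul, one_mul]
    have h1 : Ψ (x * star x) = Ψ x * star (Ψ x) := by
      rw [hxs, hmul₁, hmarg₁, hmarg₁, hm, hst]
    have h2 : Ψ x * Ψ 1 = Ψ x := by
      rw [hΨone, hmarg₁, ← hm, mul_one]
    have h1' : Ψ (star x * x) = star (Ψ x) * Ψ x := by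
      rw [hxs, hxdef, htp.tmul_mul, one_mul, hmarg₁, hmarg₁, hm, hst]
    have h2' : Ψ 1 * Ψ x = Ψ x := by
      rw [hΨone, hmarg₁, ← hm, one_mul]
    constructor
    · have := cp_mul_left hΨcp h1 h2 (tmul 1 b)
      rw [hxdef, htp.tmul_mul, mul_one, one_mul] at this
      rw [this, hmarg₁, hmarg₂]
    · have := cp_mul_right hΨcp h1' h2' (tmul 1 b)
      rw [hxdef, htp.tmul_mul, mul_one, one_mul] at this
      rw [this, hmarg₁, hmarg₂]
  · set x : C := tmul 1 b with hxdef
    have hxs : star x = tmul 1 (star b) := by rw [hxdef, htp.tmul_star, star_one]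
    have h1 : Ψ (x * star x) = Ψ x * star (Ψ x) := by
      rw [hxs, hxdef, htp.tmul_mul, one_mul, hmarg₂, hmarg₂, hm, hst]
    have h2 : Ψ x * Ψ 1 = Ψ x := by
      rw [hΨone', hmarg₂, ← hm, mul_one]
    have h1' : Ψ (star x * x) = star (Ψ x) * Ψ x := by
      rw [hxs, hxdef, htp.tmul_mul, one_mul, hmarg₂, hmarg₂, hm, hst]
    have h2' : Ψ 1 * Ψ x = Ψ x := by
      rw [hΨone', hmarg₂, ← hm, one_mul]
    constructor
    · have := cp_mul_right hΨcp h1' h2' (tmul a 1)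
      rw [hxdef, htp.tmul_mul, mul_one, one_mul] at this
      rw [this, hmarg₁, hmarg₂]
    · have := cp_mul_left hΨcp h1 h2 (tmul a 1)
      rw [hxdef, htp.tmul_mul, mul_one, one_mul] at this
      rw [this, hmarg₁, hmarg₂]

end Main

/-- **Joint maps with a `*`-representation marginal** (Theorem 7(c) of the paper).
Suppose `Φ₁ ∈ CP_P(A;H)` and `Φ₂ ∈ CP_P(B;H)` are compatible, with joint map
`Ψ ∈ CP_P(A ⊗ B; H)`. If `Φ₁` or `Φ₂` is a `*`-representation, then the ranges of `Φ₁`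
and `Φ₂` commute, the joint map is of the product form `Ψ (a ⊗ b) = Φ₁ a * Φ₂ b`, and it
is unique. -/
theorem joint_map_of_star_representation_marginal
    {A B C : Type*} [CStarAlgebra A] [CStarAlgebra B] [CStarAlgebra C]
    (tmul : A →ₗ[ℂ] B →ₗ[ℂ] C) (htp : IsTensorProductOfAlgebras A B C tmul)
    {H : Type*} [NormedAddCommGroup H] [InnerProductSpace ℂ H] [CompleteSpace H]
    (P : H →L[ℂ] H) (hP : P.IsPositive)
    (Φ₁ : A →ₗ[ℂ] H →L[ℂ] H) (Φ₂ : B →ₗ[ℂ] H →L[ℂ] H)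
    (hΦ₁ : Φ₁ ∈ CPWithUnit A H P) (hΦ₂ : Φ₂ ∈ CPWithUnit B H P)
    (Ψ : C →ₗ[ℂ] H →L[ℂ] H) (hΨ : Ψ ∈ CPWithUnit C H P)
    (hmarg₁ : ∀ a : A, Ψ (tmul a 1) = Φ₁ a) (hmarg₂ : ∀ b : B, Ψ (tmul 1 b) = Φ₂ b)
    (hrep : IsStarRepresentation Φ₁ ∨ IsStarRepresentation Φ₂) :
    (∀ (a : A) (b : B), Commute (Φ₁ a) (Φ₂ b)) ∧
    (∀ (a : A) (b : B), Ψ (tmul a b) = Φ₁ a * Φ₂ b) ∧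
    (∀ Ψ' : C →ₗ[ℂ] H →L[ℂ] H, Ψ' ∈ CPWithUnit C H P →
      (∀ a : A, Ψ' (tmul a 1) = Φ₁ a) → (∀ b : B, Ψ' (tmul 1 b) = Φ₂ b) → Ψ' = Ψ) := by
  have hprod := joint_prod tmul htp Φ₁ Φ₂ Ψ hΨ.1 hmarg₁ hmarg₂ hrep
  refine ⟨fun a b => ((hprod a b).1.symm.trans (hprod a b).2), fun a b => (hprod a b).1, ?_⟩
  intro Ψ' hΨ' hm1 hm2
  have hprod' := joint_prod tmul htp Φ₁ Φ₂ Ψ' hΨ'.1 hm1 hm2 hrep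
  have hbound : ∀ c : C, ‖(Ψ - Ψ') c‖ ≤ (2 * ‖P‖) * ‖c‖ := by
    intro c
    rw [LinearMap.sub_apply]
    calc ‖Ψ c - Ψ' c‖ ≤ ‖Ψ c‖ + ‖Ψ' c‖ := norm_sub_le _ _
      _ ≤ ‖Ψ 1‖ * ‖c‖ + ‖Ψ' 1‖ * ‖c‖ := add_le_add (cp_norm_le hΨ.1 c) (cp_norm_le hΨ'.1 c)
      _ = (2 * ‖P‖) * ‖c‖ := by rw [hΨ.2, hΨ'.2]; ring
  set g : C →L[ℂ] (H →L[ℂ] H) := LinearMap.mkContinuous (Ψ - Ψ') (2 * ‖P‖) hbound with hg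
  have hker : Submodule.span ℂ {c : C | ∃ a b, c = tmul a b} ≤ LinearMap.ker (Ψ - Ψ') := by
    rw [Submodule.span_le]
    rintro c ⟨a, b, rfl⟩
    rw [SetLike.mem_coe, LinearMap.mem_ker, LinearMap.sub_apply,
      (hprod a b).1, (hprod' a b).1, sub_self]
  have hEqOn : Set.EqOn (⇑g) 0
      (↑(Submodule.span ℂ {c : C | ∃ a b, c = tmul a b}) : Set C) := by
    intro c hc
    have : (Ψ - Ψ') c = 0 := hker hc
    simpa [hg, LinearMap.mkContinuous_apply] using this
  have hzero : ⇑g = 0 := Continuous.ext_on htp.dense_span g.continuous continuous_const hEqOn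
  refine LinearMap.ext fun c => ?_
  have : g c = 0 := by rw [hzero]; rfl
  rw [hg, LinearMap.mkContinuous_apply, LinearMap.sub_apply, sub_eq_zero] at this
  exact this.symm
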